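/- Let Ω be an open, bounded, convex subset of ℝ² with 0 ∈ Ω and Ω ⊆ closedBall 0 D for some D > 0, let g = gauge Ω, and let y be a point of the frontier of Ω at which g is differentiable. Then: (i) ⟪∇g(y), z − y⟫ ≤ 0 for every z in the closure of Ω (so ∇g(y) is an outward normal vector to Ω at y); (ii) ⟪∇g(y), y⟫ = 1; and (iii) ‖∇g(y)‖ ≥ 1/D. -/

import Mathlib

open RealInnerProductSpace Metric

theorem gauge_gradient_outward_normal
    (Ω : Set (EuclideanSpace ℝ (Fin 2)))
    (hΩo : IsOpen Ω) (hΩb : Bornology.IsBounded Ω) (hΩc : Convex ℝ Ω)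
    (h0 : (0 : EuclideanSpace ℝ (Fin 2)) ∈ Ω)
    (D : ℝ) (hD : 0 < D) (hΩD : Ω ⊆ closedBall 0 D)
    (y : EuclideanSpace ℝ (Fin 2)) (hy : y ∈ frontier Ω)
    (hdiff : DifferentiableAt ℝ (gauge Ω) y) :
    (∀ z ∈ closure Ω, ⟪gradient (gauge Ω) y, z - y⟫ ≤ 0) ∧
    ⟪gradient (gauge Ω) y, y⟫ = 1 ∧
    1 / D ≤ ‖gradient (gauge Ω) y‖ := by
  have hnhds : Ω ∈ nhds (0 : EuclideanSpace ℝ (Fin 2)) := hΩo.mem_nhds h0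
  have habs : Absorbent ℝ Ω := absorbent_nhds_zero hnhds
  have hgy : gauge Ω y = 1 := (gauge_eq_one_iff_mem_frontier hΩc hnhds).2 hy
  -- the gauge is convex
  have hconv : ConvexOn ℝ Set.univ (gauge Ω) := by
    refine ⟨convex_univ, fun x _ z _ a b ha hb hab => ?_⟩
    calc gauge Ω (a • x + b • z) ≤ gauge Ω (a • x) + gauge Ω (b • z) :=
          gauge_add_le hΩc habs _ _
      _ = a * gauge Ω x + b * gauge Ω z := by
          rw [gauge_smul_of_nonneg ha, gauge_smul_of_nonneg hb, smul_eq_mul, smul_eq_mul]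
  -- identify the gradient with the Fréchet derivative
  have hg : HasGradientAt (gauge Ω) (gradient (gauge Ω) y) y := hdiff.hasGradientAt
  rw [hasGradientAt_iff_hasFDerivAt] at hg
  have hfd : ∀ v : EuclideanSpace ℝ (Fin 2), fderiv ℝ (gauge Ω) y v = ⟪gradient (gauge Ω) y, v⟫ := by
    intro v
    rw [hg.fderiv]
    simp [InnerProductSpace.toDual_apply_apply]
  -- subgradient inequality: fderiv (gauge Ω) y v ≤ gauge Ω (y + v) - gauge Ω y
  have hsub : ∀ v : EuclideanSpace ℝ (Fin 2), fderiv ℝ (gauge Ω) y v ≤ gauge Ω (y + v) - 1 := by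
    intro v
    set φ : ℝ → ℝ := fun t => gauge Ω (y + t • v) with hφ
    have hφconv : ConvexOn ℝ Set.univ φ := by
      have := hconv.comp_affineMap (AffineMap.lineMap y (y + v) : ℝ →ᵃ[ℝ] EuclideanSpace ℝ (Fin 2))
      simp only [Set.preimage_univ] at this
      have e : φ = gauge Ω ∘ ⇑(AffineMap.lineMap y (y + v) : ℝ →ᵃ[ℝ] EuclideanSpace ℝ (Fin 2)) := by
        funext t
        simp [hφ, AffineMap.lineMap_apply, add_comm]
      rw [e]; exact this
    have hline : HasDerivAt (fun t : ℝ => y + t • v) v 0 := by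
      simpa using ((hasDerivAt_id (0 : ℝ)).smul_const v).const_add y
    have hφderiv : HasDerivAt φ (fderiv ℝ (gauge Ω) y v) 0 := by
      have h1 : HasFDerivAt (gauge Ω) (fderiv ℝ (gauge Ω) y) ((fun t : ℝ => y + t • v) 0) := by
        simpa using hdiff.hasFDerivAt
      exact h1.comp_hasDerivAt 0 hline
    have := hφconv.le_slope_of_hasDerivAt (Set.mem_univ 0) (Set.mem_univ 1) zero_lt_one hφderiv
    have hs : slope φ 0 1 = φ 1 - φ 0 := by simp [slope_def_field]
    rw [hs] at this
    simpa [hφ, hgy] using this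
  -- part (i)
  have part1 : ∀ z ∈ closure Ω, ⟪gradient (gauge Ω) y, z - y⟫ ≤ 0 := by
    intro z hz
    have hz1 : gauge Ω z ≤ 1 := (gauge_le_one_iff_mem_closure hΩc hnhds).2 hz
    have := hsub (z - y)
    rw [hfd] at this
    have h2 : gauge Ω (y + (z - y)) = gauge Ω z := by rw [add_sub_cancel]
    rw [h2] at this
    linarith
  -- part (ii)
  have part2 : ⟪gradient (gauge Ω) y, y⟫ = 1 := by
    -- derivative of t ↦ gauge Ω (t • y) at t = 1
    have hline : HasDerivAt (fun t : ℝ => t • y) y 1 := by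
      simpa using (hasDerivAt_id (1 : ℝ)).smul_const y
    have h1 : HasFDerivAt (gauge Ω) (fderiv ℝ (gauge Ω) y) ((fun t : ℝ => t • y) 1) := by
      simpa using hdiff.hasFDerivAt
    have hψ : HasDerivAt (fun t : ℝ => gauge Ω (t • y)) (fderiv ℝ (gauge Ω) y y) 1 :=
      by have := h1.comp_hasDerivAt 1 hline; exact this
    have heq : (fun t : ℝ => gauge Ω (t • y)) =ᶠ[nhds (1 : ℝ)] fun t => t := by
      filter_upwards [Ioi_mem_nhds (zero_lt_one' ℝ)] with t ht
      rw [gauge_smul_of_nonneg (le_of_lt ht), smul_eq_mul, hgy, mul_one]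
    have hψ' : HasDerivAt (fun t : ℝ => t) (fderiv ℝ (gauge Ω) y y) 1 :=
      hψ.congr_of_eventuallyEq heq.symm
    have : fderiv ℝ (gauge Ω) y y = 1 := hψ'.unique (hasDerivAt_id 1)
    rw [← hfd]; exact this
  refine ⟨part1, part2, ?_⟩
  -- part (iii)
  have hyD : ‖y‖ ≤ D := by
    have : y ∈ closedBall (0 : EuclideanSpace ℝ (Fin 2)) D :=
      closure_minimal hΩD Metric.isClosed_closedBall hy.1
    simpa [dist_eq_norm] using this
  have h1 : (1 : ℝ) ≤ ‖gradient (gauge Ω) y‖ * ‖y‖ := by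
    rw [← part2]; exact real_inner_le_norm _ _
  have hy0 : 0 < ‖y‖ := by
    by_contra h
    push_neg at h
    have : ‖y‖ = 0 := le_antisymm h (norm_nonneg _)
    rw [this, mul_zero] at h1; linarith
  rw [div_le_iff₀ hD]
  calc (1 : ℝ) ≤ ‖gradient (gauge Ω) y‖ * ‖y‖ := h1
    _ ≤ ‖gradient (gauge Ω) y‖ * D := by
        exact mul_le_mul_of_nonneg_left hyD (norm_nonneg _)
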